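/- arXiv:2011.05178 — 6 statements merged into one kernel-verified Lean document; each statement's English description precedes it below -/
import Mathlib

section
/- For every complex number z with Re(z) ≤ 0 and |z| ≤ 1, one has |r(z) - exp(z)| ≤ (5/12)|z|³, where r(z) = (1+z/2)/(1-z/2). -/
noncomputable def r (z : ℂ) : ℂ := (1 + z / 2) / (1 - z / 2)

theorem cn_local_error_bound (z : ℂ) (hre : z.re ≤ 0) (habs : ‖z‖ ≤ 1) :
    ‖r z - Complex.exp z‖ ≤ (5 / 12) * (‖z‖) ^ 3 := by
  set a := ‖z‖ with ha
  have ha0 : 0 ≤ a := norm_nonneg z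
  -- denominator bound
  have hden : 1 ≤ ‖(1 - z / 2)‖ := by
    have : (1 : ℝ) ≤ (1 - z / 2).re := by
      simp [Complex.sub_re, Complex.div_re]
      nlinarith [Complex.normSq_nonneg z]
    calc (1:ℝ) ≤ (1 - z/2).re := this
      _ ≤ |(1 - z/2).re| := le_abs_self _
      _ ≤ ‖(1 - z/2)‖ := Complex.abs_re_le_norm _
  have hden0 : (1 : ℂ) - z / 2 ≠ 0 := by
    intro h
    rw [h] at hden
    simp at hden
    linarith
  -- Taylor remainder
  set P : ℂ := 1 + z + z ^ 2 / 2 + z ^ 3 / 6 with hP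
  set E : ℂ := Complex.exp z - P with hE
  have hEb : ‖E‖ ≤ a ^ 4 * (5 / 96) := by
    have h := Complex.exp_bound habs (n := 4) (by norm_num)
    have hsum : (∑ m ∈ Finset.range 4, z ^ m / (m.factorial : ℂ)) = P := by
      rw [hP]
      simp [Finset.sum_range_succ, Nat.factorial]
    rw [hsum] at h
    have heq : ((Nat.succ 4 : ℕ) : ℝ) * (((Nat.factorial 4 : ℕ) : ℝ) * ((4:ℕ) : ℝ))⁻¹ = 5 / 96 := by
      norm_num [Nat.factorial]
    rw [heq] at h
    exact h
  have hEb' : ‖E‖ ≤ a ^ 3 * (5 / 96) := by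
    have : a ^ 4 ≤ a ^ 3 := by
      calc a ^ 4 = a ^ 3 * a := by ring
        _ ≤ a ^ 3 * 1 := by nlinarith [pow_nonneg ha0 3]
        _ = a ^ 3 := by ring
    nlinarith
  -- numerator
  have key : r z - Complex.exp z =
      (z ^ 3 / 12 + z ^ 4 / 12 - (1 - z / 2) * E) / (1 - z / 2) := by
    rw [r]
    rw [div_sub' hden0, div_eq_div_iff hden0 hden0]
    have hexp : Complex.exp z = P + E := by rw [hE]; ring
    rw [hexp, hP]
    ring
  rw [key, norm_div]
  have hnum : ‖(z ^ 3 / 12 + z ^ 4 / 12 - (1 - z / 2) * E)‖ ≤ (5/12) * a ^ 3 := by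
    have h1 : ‖(z ^ 3 / 12)‖ = a ^ 3 / 12 := by
      simp [norm_div, norm_pow, ha]
    have h2 : ‖(z ^ 4 / 12)‖ ≤ a ^ 3 / 12 := by
      simp only [norm_div, norm_pow]
      have : a ^ 4 ≤ a ^ 3 := by nlinarith [pow_nonneg ha0 3]
      simp [ha]
      nlinarith
    have h3 : ‖((1 - z / 2) * E)‖ ≤ (3 / 2) * (a ^ 3 * (5 / 96)) := by
      rw [norm_mul]
      have hd : ‖(1 - z / 2)‖ ≤ 3 / 2 := by
        calc ‖(1 - z / 2)‖ ≤ ‖(1 : ℂ)‖ + ‖(z / 2)‖ :=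
              norm_sub_le _ _
          _ = 1 + a / 2 := by simp [norm_div, ha]
          _ ≤ 3 / 2 := by linarith
      have hE0 : 0 ≤ ‖E‖ := norm_nonneg _
      calc ‖(1 - z/2)‖ * ‖E‖ ≤ (3/2) * ‖E‖ := by nlinarith
        _ ≤ (3/2) * (a ^ 3 * (5/96)) := by nlinarith
    calc ‖(z ^ 3 / 12 + z ^ 4 / 12 - (1 - z / 2) * E)‖
        ≤ ‖(z ^ 3 / 12 + z ^ 4 / 12)‖ + ‖((1 - z / 2) * E)‖ :=
          norm_sub_le _ _
      _ ≤ ‖(z ^ 3 / 12)‖ + ‖(z ^ 4 / 12)‖ + ‖((1 - z/2) * E)‖ := by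
          have := norm_add_le (z ^ 3 / 12) (z ^ 4 / 12)
          linarith
      _ ≤ a ^ 3 / 12 + a ^ 3 / 12 + (3/2) * (a ^ 3 * (5/96)) := by linarith
      _ ≤ (5/12) * a ^ 3 := by nlinarith [pow_nonneg ha0 3]
  calc ‖(z ^ 3 / 12 + z ^ 4 / 12 - (1 - z / 2) * E)‖ / ‖(1 - z / 2)‖
      ≤ ‖(z ^ 3 / 12 + z ^ 4 / 12 - (1 - z / 2) * E)‖ / 1 := by
        apply div_le_div_of_nonneg_left (norm_nonneg _) (by norm_num) hden
    _ = ‖(z ^ 3 / 12 + z ^ 4 / 12 - (1 - z / 2) * E)‖ := div_one _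
    _ ≤ (5/12) * a ^ 3 := hnum
end

section
/- For every α ∈ (0, π/2) and every ρ with 0 ≤ ρ ≤ 1, one has |r(-ρ e^{iα})|² ≤ ((1 - (2ρ/5)cos α)/(1 + (2ρ/5)cos α))², where r(z) = (1+z/2)/(1-z/2). Equivalently, (1 + ρ²/4 - ρ cos α)/(1 + ρ²/4 + ρ cos α) ≤ ((1 - (2ρ/5)cos α)/(1 + (2ρ/5)cos α))². -/
theorem cn_abs_sq_bound (α ρ : ℝ) (hα0 : 0 < α) (hα : α < Real.pi / 2)
    (hρ0 : 0 ≤ ρ) (hρ1 : ρ ≤ 1) :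
    (‖r (-(ρ : ℂ) * Complex.exp ((α : ℂ) * Complex.I))‖) ^ 2 ≤
      ((1 - (2 * ρ / 5) * Real.cos α) / (1 + (2 * ρ / 5) * Real.cos α)) ^ 2 ∧
    (1 + ρ ^ 2 / 4 - ρ * Real.cos α) / (1 + ρ ^ 2 / 4 + ρ * Real.cos α) ≤
      ((1 - (2 * ρ / 5) * Real.cos α) / (1 + (2 * ρ / 5) * Real.cos α)) ^ 2 := by
  have hc : 0 < Real.cos α := Real.cos_pos_of_mem_Ioo ⟨by linarith [Real.pi_pos], hα⟩
  have hc1 : Real.cos α ≤ 1 := Real.cos_le_one α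
  set c := Real.cos α with hcdef
  have hs : Real.sin α ^ 2 = 1 - c ^ 2 := by
    have := Real.sin_sq_add_cos_sq α; linarith
  have h1 : 0 < 1 + ρ ^ 2 / 4 + ρ * c := by nlinarith
  have h2 : 0 < 1 + 2 * ρ / 5 * c := by nlinarith
  have key : (1 + ρ ^ 2 / 4 - ρ * c) / (1 + ρ ^ 2 / 4 + ρ * c) ≤
      ((1 - 2 * ρ / 5 * c) / (1 + 2 * ρ / 5 * c)) ^ 2 := by
    rw [div_pow, div_le_div_iff₀ h1 (pow_pos h2 2)]
    have h3 : 0 ≤ ρ * c * (5 - 5 * ρ ^ 2 + 4 * ρ ^ 2 * c ^ 2) :=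
      mul_nonneg (mul_nonneg hρ0 hc.le) (by nlinarith [sq_nonneg (ρ * c)])
    nlinarith [h3]
  refine ⟨?_, key⟩
  have habs : (‖r (-(ρ : ℂ) * Complex.exp ((α : ℂ) * Complex.I))‖) ^ 2 =
      (1 + ρ ^ 2 / 4 - ρ * c) / (1 + ρ ^ 2 / 4 + ρ * c) := by
    rw [r, ← Complex.normSq_eq_norm_sq, map_div₀]
    have e1 : (1 : ℂ) + -(ρ : ℂ) * Complex.exp ((α : ℂ) * Complex.I) / 2 =
        ((1 - ρ * Real.cos α / 2 : ℝ) : ℂ) + ((-(ρ * Real.sin α / 2) : ℝ) : ℂ) * Complex.I := by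
      rw [Complex.exp_mul_I, ← Complex.ofReal_cos, ← Complex.ofReal_sin]
      push_cast; ring
    have e2 : (1 : ℂ) - -(ρ : ℂ) * Complex.exp ((α : ℂ) * Complex.I) / 2 =
        ((1 + ρ * Real.cos α / 2 : ℝ) : ℂ) + ((ρ * Real.sin α / 2 : ℝ) : ℂ) * Complex.I := by
      rw [Complex.exp_mul_I, ← Complex.ofReal_cos, ← Complex.ofReal_sin]
      push_cast; ring
    rw [e1, e2, Complex.normSq_add_mul_I, Complex.normSq_add_mul_I]
    have n1 : (1 - ρ * Real.cos α / 2) ^ 2 + (-(ρ * Real.sin α / 2)) ^ 2 =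
        1 + ρ ^ 2 / 4 - ρ * c := by linear_combination (ρ ^ 2 / 4) * hs
    have n2 : (1 + ρ * Real.cos α / 2) ^ 2 + (ρ * Real.sin α / 2) ^ 2 =
        1 + ρ ^ 2 / 4 + ρ * c := by linear_combination (ρ ^ 2 / 4) * hs
    rw [n1, n2]
  rw [habs]; exact key
end

section
/- For every α ∈ (0, π/2) and every ρ with 0 ≤ ρ ≤ 1, one has |r(-ρ e^{iα})| ≤ exp(-(4ρ/5) cos α), where r(z) = (1+z/2)/(1-z/2). -/
lemma key_ineq (u : ℝ) (h0 : 0 ≤ u) (h1 : u ≤ 1) :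
    1 - u ≤ (1 + u) * Real.exp (-(2 * u)) := by
  have hb := Real.exp_bound (x := -u) (by rwa [abs_neg, abs_of_nonneg h0]) (n := 4) (by norm_num)
  rw [abs_neg, abs_of_nonneg h0] at hb
  have hsum : ∑ m ∈ Finset.range 4, (-u) ^ m / (m.factorial : ℝ)
      = 1 - u + u ^ 2 / 2 - u ^ 3 / 6 := by
    simp [Finset.sum_range_succ, Nat.factorial]
    ring
  rw [hsum] at hb
  norm_num [Nat.factorial] at hb
  have hL : 1 - u + u ^ 2 / 2 - u ^ 3 / 6 - 5 * u ^ 4 / 96 ≤ Real.exp (-u) := by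
    have h' := (abs_sub_le_iff.1 hb).2
    nlinarith [h']
  have hLpos : (0:ℝ) ≤ 1 - u + u ^ 2 / 2 - u ^ 3 / 6 - 5 * u ^ 4 / 96 := by
    nlinarith [mul_nonneg (mul_nonneg h0 h0) (sub_nonneg.2 h1),
      mul_nonneg (mul_nonneg (mul_nonneg h0 h0) h0) (sub_nonneg.2 h1), sq_nonneg u, h0, h1]
  have h2 : Real.exp (-(2 * u)) = Real.exp (-u) ^ 2 := by
    rw [← Real.exp_nat_mul]; ring_nf
  rw [h2]
  have hsq : (1 - u + u ^ 2 / 2 - u ^ 3 / 6 - 5 * u ^ 4 / 96) ^ 2 ≤ Real.exp (-u) ^ 2 := by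
    apply pow_le_pow_left₀ hLpos hL
  have hpoly : 1 - u ≤ (1 + u) * (1 - u + u ^ 2 / 2 - u ^ 3 / 6 - 5 * u ^ 4 / 96) ^ 2 := by
    nlinarith [pow_nonneg h0 3, pow_nonneg h0 4, pow_nonneg h0 5, pow_nonneg h0 6,
      mul_nonneg (pow_nonneg h0 3) (sub_nonneg.2 h1), mul_nonneg (pow_nonneg h0 4) (sub_nonneg.2 h1),
      mul_nonneg (pow_nonneg h0 5) (sub_nonneg.2 h1), mul_nonneg (pow_nonneg h0 6) (sub_nonneg.2 h1),
      mul_nonneg (pow_nonneg h0 7) (sub_nonneg.2 h1), mul_nonneg (pow_nonneg h0 8) (sub_nonneg.2 h1)]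
  calc 1 - u ≤ (1 + u) * (1 - u + u ^ 2 / 2 - u ^ 3 / 6 - 5 * u ^ 4 / 96) ^ 2 := hpoly
    _ ≤ (1 + u) * Real.exp (-u) ^ 2 := by
        apply mul_le_mul_of_nonneg_left hsq (by linarith)

theorem cn_abs_bound_small_rho (α ρ : ℝ) (hα0 : 0 < α) (hα : α < Real.pi / 2)
    (hρ0 : 0 ≤ ρ) (hρ1 : ρ ≤ 1) :
    ‖r (-(ρ : ℂ) * Complex.exp ((α : ℂ) * Complex.I))‖ ≤
      Real.exp (-(4 * ρ / 5) * Real.cos α) := by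
  set c := Real.cos α with hc
  have hcpos : 0 < c := Real.cos_pos_of_mem_Ioo ⟨by linarith [Real.pi_pos], hα⟩
  have hcle : c ≤ 1 := Real.cos_le_one α
  set w : ℂ := -(ρ : ℂ) * Complex.exp ((α : ℂ) * Complex.I) with hw
  have hwre : w.re = -(ρ * c) := by
    simp [hw, Complex.exp_mul_I, hc, Complex.cos_ofReal_re]
  have hwim : w.im = -(ρ * Real.sin α) := by
    simp [hw, Complex.exp_mul_I, Complex.sin_ofReal_re]
  have hN1 : Complex.normSq (1 + w / 2) = 1 - ρ * c + ρ ^ 2 / 4 := by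
    have hs := Real.sin_sq_add_cos_sq α
    simp [Complex.normSq_apply, Complex.add_re, Complex.add_im, Complex.div_re,
      Complex.div_im, hwre, hwim, Complex.normSq_apply]
    nlinarith [hs]
  have hN2 : Complex.normSq (1 - w / 2) = 1 + ρ * c + ρ ^ 2 / 4 := by
    have hs := Real.sin_sq_add_cos_sq α
    simp [Complex.normSq_apply, Complex.sub_re, Complex.sub_im, Complex.div_re,
      Complex.div_im, hwre, hwim]
    nlinarith [hs]
  have hden_pos : (0:ℝ) < 1 + ρ * c + ρ ^ 2 / 4 := by nlinarith [mul_nonneg hρ0 hcpos.le]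
  have habs : ‖r w‖ = Real.sqrt ((1 - ρ * c + ρ ^ 2 / 4) / (1 + ρ * c + ρ ^ 2 / 4)) := by
    rw [r, norm_div, Complex.norm_def, Complex.norm_def, hN1, hN2, ← Real.sqrt_div']
    positivity
  rw [habs]
  set E := Real.exp (-(4 * ρ / 5) * c) with hE
  have hEpos : 0 < E := Real.exp_pos _
  have hmain : (1 - ρ * c + ρ ^ 2 / 4) / (1 + ρ * c + ρ ^ 2 / 4) ≤ E ^ 2 := by
    set A : ℝ := 1 + ρ ^ 2 / 4 with hA
    have hApos : (0:ℝ) < A := by positivity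
    have hAle : A ≤ 5 / 4 := by rw [hA]; nlinarith
    set u : ℝ := ρ * c / A with hu
    have hu0 : 0 ≤ u := by positivity
    have hu1 : u ≤ 1 := by
      rw [hu, div_le_one hApos, hA]; nlinarith
    have hk := key_ineq u hu0 hu1
    have hratio : (1 - ρ * c + ρ ^ 2 / 4) / (1 + ρ * c + ρ ^ 2 / 4) = (1 - u) / (1 + u) := by
      rw [hu]
      field_simp
      ring
    have h1u : (0:ℝ) < 1 + u := by linarith
    have hstep1 : (1 - u) / (1 + u) ≤ Real.exp (-(2 * u)) := by
      rw [div_le_iff₀ h1u]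
      linarith [hk]
    have hexp2 : E ^ 2 = Real.exp (-(8 * ρ / 5) * c) := by
      rw [hE, ← Real.exp_nat_mul]; ring_nf
    have hstep2 : Real.exp (-(2 * u)) ≤ Real.exp (-(8 * ρ / 5) * c) := by
      apply Real.exp_le_exp.2
      have h2u : (2:ℝ) * u = 2 * (ρ * c) / A := by rw [hu]; ring
      have : 8 * ρ / 5 * c ≤ 2 * u := by
        rw [h2u, le_div_iff₀ hApos, hA]
        nlinarith [mul_nonneg hρ0 hcpos.le]
      linarith
    rw [hratio, hexp2]
    exact hstep1.trans hstep2
  calc Real.sqrt ((1 - ρ * c + ρ ^ 2 / 4) / (1 + ρ * c + ρ ^ 2 / 4))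
      ≤ Real.sqrt (E ^ 2) := Real.sqrt_le_sqrt hmain
    _ = E := by rw [Real.sqrt_sq hEpos.le]
end

section
/- For every α ∈ (0, π/2) and every ρ ≥ 1, one has |r(-ρ e^{iα})| ≤ exp(-(4/(5ρ)) cos α), where r(z) = (1+z/2)/(1-z/2). -/
lemma key_aux (t : ℝ) (ht : 0 ≤ t) : (1 - t) * Real.exp (2 * t) ≤ 1 + t := by
  have hd : ∀ x : ℝ, HasDerivAt (fun s : ℝ => (1 + s) - (1 - s) * Real.exp (2 * s))
      (1 - (1 - 2 * x) * Real.exp (2 * x)) x := by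
    intro x
    have h1 : HasDerivAt (fun s : ℝ => 1 + s) 1 x := by
      simpa using (hasDerivAt_id x).const_add 1
    have h2 : HasDerivAt (fun s : ℝ => Real.exp (2 * s)) (Real.exp (2 * x) * 2) x := by
      have : HasDerivAt (fun s : ℝ => 2 * s) 2 x := by
        simpa using (hasDerivAt_id x).const_mul 2
      exact (Real.hasDerivAt_exp (2 * x)).comp x this
    have h3 : HasDerivAt (fun s : ℝ => 1 - s) (-1) x := by
      simpa using (hasDerivAt_id x).const_sub (1:ℝ)
    have : HasDerivAt (fun s : ℝ => (1 + s) - (1 - s) * Real.exp (2 * s))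
        (1 - (-1 * Real.exp (2 * x) + (1 - x) * (Real.exp (2 * x) * 2))) x := h1.sub (h3.mul h2)
    convert this using 1
    ring
  have hmono : MonotoneOn (fun s : ℝ => (1 + s) - (1 - s) * Real.exp (2 * s)) (Set.Ici 0) := by
    apply monotoneOn_of_deriv_nonneg (convex_Ici 0)
    · exact (Continuous.sub (by continuity) (by continuity)).continuousOn
    · intro x _
      exact ((hd x).differentiableAt).differentiableWithinAt
    · intro x _
      rw [(hd x).deriv]
      have h5 := Real.add_one_le_exp (-(2 * x))
      have hmul : Real.exp (-(2 * x)) * Real.exp (2 * x) = 1 := by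
        rw [← Real.exp_add]; simp
      nlinarith [Real.exp_pos (2 * x), Real.exp_pos (-(2 * x))]
  have h0 : (0:ℝ) ∈ Set.Ici (0:ℝ) := Set.self_mem_Ici
  have := hmono h0 (Set.mem_Ici.mpr ht) ht
  simp only [mul_zero, Real.exp_zero] at this
  linarith [this]

theorem cn_abs_bound_large_rho (α ρ : ℝ) (hα0 : 0 < α) (hα : α < Real.pi / 2)
    (hρ : 1 ≤ ρ) :
    ‖r (-(ρ : ℂ) * Complex.exp ((α : ℂ) * Complex.I))‖ ≤
      Real.exp (-(4 / (5 * ρ)) * Real.cos α) := by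
  set z : ℂ := -(ρ : ℂ) * Complex.exp ((α : ℂ) * Complex.I) with hz
  have hw : Complex.exp ((α:ℂ) * Complex.I)
      = (Real.cos α : ℂ) + (Real.sin α : ℂ) * Complex.I := by
    rw [Complex.exp_mul_I, Complex.ofReal_cos, Complex.ofReal_sin]
  have hpyth := Real.sin_sq_add_cos_sq α
  have h1 : ‖1 + z / 2‖ ^ 2 = 1 + ρ^2/4 - ρ * Real.cos α := by
    rw [Complex.sq_norm, Complex.normSq_apply]
    simp [hz, hw, Complex.add_re, Complex.add_im, Complex.div_re, Complex.div_im,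
      Complex.mul_re, Complex.mul_im, Complex.normSq_apply, Complex.cos_ofReal_re,
      Complex.sin_ofReal_re]
    nlinarith [hpyth]
  have h2 : ‖1 - z / 2‖ ^ 2 = 1 + ρ^2/4 + ρ * Real.cos α := by
    rw [Complex.sq_norm, Complex.normSq_apply]
    simp [hz, hw, Complex.sub_re, Complex.sub_im, Complex.div_re, Complex.div_im,
      Complex.mul_re, Complex.mul_im, Complex.normSq_apply, Complex.cos_ofReal_re,
      Complex.sin_ofReal_re]
    nlinarith [hpyth]
  -- basic positivity facts
  have hρ0 : (0:ℝ) < ρ := lt_of_lt_of_le one_pos hρ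
  have hcos : 0 < Real.cos α :=
    Real.cos_pos_of_mem_Ioo ⟨by linarith [Real.pi_pos], hα⟩
  set A : ℝ := 1 + ρ^2/4 with hA
  set B : ℝ := ρ * Real.cos α with hB
  have hApos : 0 < A := by positivity
  have hBpos : 0 < B := by positivity
  have hABpos : 0 < A + B := by linarith
  set c : ℝ := 4 / (5 * ρ) * Real.cos α with hc
  set t : ℝ := B / A with hT
  have htnonneg : 0 ≤ t := le_of_lt (div_pos hBpos hApos)
  have hkey := key_aux t htnonneg
  have hct : c ≤ t := by
    rw [hc, hT, hB, hA, div_mul_eq_mul_div,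
      div_le_div_iff₀ (by positivity) (by positivity)]
    nlinarith [sq_nonneg (ρ - 1), sq_nonneg ρ]
  -- the squared inequality
  have hsq : ‖r z‖ ^ 2 ≤ Real.exp (-(4 / (5 * ρ)) * Real.cos α) ^ 2 := by
    have habs : ‖r z‖ ^ 2 = (A - B) / (A + B) := by
      rw [r, norm_div, div_pow, h1, h2]
    have hgoal2 : Real.exp (-(4 / (5 * ρ)) * Real.cos α) ^ 2 = Real.exp (-(2 * c)) := by
      rw [sq, ← Real.exp_add]
      congr 1
      rw [hc]; ring
    rw [habs, hgoal2]
    -- reduce to (A - B) ≤ exp (-(2 t)) * (A + B) when A - B ≥ 0, or trivial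
    have hexple : Real.exp (-(2 * t)) ≤ Real.exp (-(2 * c)) := by
      apply Real.exp_le_exp.mpr; linarith
    rcases le_or_gt (A - B) 0 with hneg | hpos
    · calc (A - B) / (A + B) ≤ 0 := div_nonpos_of_nonpos_of_nonneg hneg hABpos.le
        _ ≤ Real.exp (-(2 * c)) := (Real.exp_pos _).le
    · have hmul : Real.exp (2 * t) * Real.exp (-(2 * t)) = 1 := by
        rw [← Real.exp_add]; simp
      have hBA : B = t * A := by
        rw [hT]; field_simp
      have hstep : A - B ≤ Real.exp (-(2 * t)) * (A + B) := by
        nlinarith [Real.exp_pos (-(2 * t)), Real.exp_pos (2 * t)]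
      calc (A - B) / (A + B) ≤ Real.exp (-(2 * t)) := by
            rw [div_le_iff₀ hABpos]; linarith
        _ ≤ Real.exp (-(2 * c)) := hexple
  have := Real.sqrt_le_sqrt hsq
  rwa [Real.sqrt_sq (norm_nonneg _), Real.sqrt_sq (Real.exp_nonneg _)] at this
end

section
/- For every complex z with Re(z) ≤ 0 and |z| ≤ 1, one has |r₀(z/2) - exp(z/2)| ≤ (3/8)|z|², where r₀(w) = 1/(1-w) is the stability function of the implicit Euler method. -/
noncomputable def r₀ (w : ℂ) : ℂ := 1 / (1 - w)

theorem implicit_euler_error_bound (z : ℂ) (hre : z.re ≤ 0) (habs : ‖z‖ ≤ 1) :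
    ‖r₀ (z / 2) - Complex.exp (z / 2)‖ ≤ (3 / 8) * ‖z‖ ^ 2 := by
  set w := z / 2 with hw
  have hwre : w.re ≤ 0 := by
    rw [hw]; simp [Complex.div_re]; linarith
  have hwabs : ‖w‖ ≤ 1 / 2 := by
    rw [hw, norm_div]; simp; linarith
  -- |1 - w| ≥ 1
  have h1 : 1 ≤ ‖1 - w‖ := by
    have hsq : (‖1 - w‖) ^ 2 = (1 - w.re) ^ 2 + w.im ^ 2 := by
      rw [Complex.sq_norm, Complex.normSq_apply]
      simp [Complex.sub_re, Complex.sub_im]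
      ring
    nlinarith [norm_nonneg (1 - w), norm_nonneg (1 - w), sq_nonneg w.im]
  have hne : (1 : ℂ) - w ≠ 0 := by
    intro h
    rw [h] at h1; simp at h1; linarith
  have key : r₀ w - Complex.exp w = (1 - (1 - w) * Complex.exp w) / (1 - w) := by
    rw [eq_div_iff hne, r₀, sub_mul, one_div, inv_mul_cancel₀ hne]; ring
  rw [key, norm_div]
  have habs1 : ‖1 - (1 - w) * Complex.exp w‖ / ‖1 - w‖
      ≤ ‖1 - (1 - w) * Complex.exp w‖ := by
    apply div_le_self (norm_nonneg _) h1
  refine habs1.trans ?_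
  -- Taylor bounds
  have hb2 : ‖Complex.exp w - (1 + w)‖ ≤ ‖w‖ ^ 2 * (3 / 4) := by
    have := Complex.exp_bound (x := w) (by linarith) (n := 2) (by norm_num)
    have h2 : ∑ i ∈ Finset.range 2, w ^ i / (Nat.factorial i) = 1 + w := by
      simp [Finset.sum_range_succ]
    rw [h2] at this
    refine this.trans (le_of_eq ?_)
    norm_num [Nat.factorial]
  have hb3 : ‖Complex.exp w - (1 + w + w ^ 2 / 2)‖ ≤ ‖w‖ ^ 3 * (2 / 9) := by
    have := Complex.exp_bound (x := w) (by linarith) (n := 3) (by norm_num)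
    have h2 : ∑ i ∈ Finset.range 3, w ^ i / (Nat.factorial i) = 1 + w + w ^ 2 / 2 := by
      norm_num [Finset.sum_range_succ, Nat.factorial]
    rw [h2] at this
    refine this.trans (le_of_eq ?_)
    norm_num [Nat.factorial]
  have hsplit : 1 - (1 - w) * Complex.exp w =
      -(Complex.exp w - (1 + w + w ^ 2 / 2)) + w * (Complex.exp w - (1 + w)) + w ^ 2 / 2 := by
    ring
  rw [hsplit]
  have t1 := norm_add_le (-(Complex.exp w - (1 + w + w ^ 2 / 2)) + w * (Complex.exp w - (1 + w))) (w ^ 2 / 2)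
  have t2 := norm_add_le (-(Complex.exp w - (1 + w + w ^ 2 / 2))) (w * (Complex.exp w - (1 + w)))
  rw [norm_neg] at t2
  have hmul : ‖w * (Complex.exp w - (1 + w))‖ ≤ ‖w‖ * (‖w‖ ^ 2 * (3 / 4)) := by
    rw [norm_mul]
    exact mul_le_mul_of_nonneg_left hb2 (norm_nonneg w)
  have hhalf : ‖w ^ 2 / 2‖ = ‖w‖ ^ 2 / 2 := by
    rw [norm_div, norm_pow]; simp
  have hzw : ‖w‖ = ‖z‖ / 2 := by
    rw [hw, norm_div]; simp
  have h0 : 0 ≤ ‖w‖ := norm_nonneg w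
  rw [hzw] at hb3 hmul hhalf hwabs
  nlinarith [t1, t2, hb3, hmul, hhalf, norm_nonneg z, sq_nonneg (‖z‖), habs]
end

section
/- For every complex z with Re(z) ≤ 0 and |z| ≤ 1, one has |r₀(z/2)² - exp(z)| ≤ (6/8)|z|², where r₀(w) = 1/(1-w). -/
theorem implicit_euler_sq_error_bound (z : ℂ) (hre : z.re ≤ 0) (habs : ‖z‖ ≤ 1) :
    ‖r₀ (z / 2) ^ 2 - Complex.exp z‖ ≤ (6 / 8) * (‖z‖) ^ 2 := by
  set w := z / 2 with hw
  have hwz : ‖w‖ = ‖z‖ / 2 := by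
    rw [hw, norm_div]; simp
  have hwabs : ‖w‖ ≤ 1 / 2 := by rw [hwz]; linarith
  have hwre : w.re ≤ 0 := by
    rw [hw]
    simp only [Complex.div_re]
    norm_num
    nlinarith [sq_nonneg z.im]
  have hden : 1 ≤ ‖1 - w‖ := by
    calc (1 : ℝ) ≤ (1 - w).re := by simp [Complex.sub_re]; linarith
    _ ≤ ‖1 - w‖ := Complex.re_le_norm _
  have hne : (1 : ℂ) - w ≠ 0 := by
    intro h; rw [h] at hden; simp at hden; linarith
  have hr_abs : ‖r₀ w‖ ≤ 1 := by
    rw [r₀, norm_div, norm_one, div_le_one (by linarith)]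
    exact hden
  have hexp_abs : ‖Complex.exp w‖ ≤ 1 := by
    rw [Complex.norm_exp]
    exact Real.exp_le_one_iff.mpr hwre
  -- remainder bound from exp_bound with n = 3
  have hR := Complex.exp_bound (x := w) (by linarith) (n := 3) (by norm_num)
  have hsum : (∑ m ∈ Finset.range 3, w ^ m / m.factorial) = 1 + w + w ^ 2 / 2 := by
    simp [Finset.sum_range_succ]
  rw [hsum] at hR
  set R := Complex.exp w - (1 + w + w ^ 2 / 2) with hRdef
  have hRabs : ‖R‖ ≤ ‖w‖ ^ 3 * (2 / 9) := by
    convert hR using 2; norm_num [Nat.factorial]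
  have hfeq : 1 - (1 - w) * Complex.exp w = w ^ 2 / 2 + w ^ 3 / 2 - (1 - w) * R := by
    have hE : Complex.exp w = 1 + w + w ^ 2 / 2 + R := by rw [hRdef]; ring
    rw [hE]; ring
  have h1w : ‖1 - w‖ ≤ 3 / 2 := by
    calc ‖1 - w‖ ≤ ‖(1 : ℂ)‖ + ‖w‖ := norm_sub_le 1 w
    _ ≤ 3 / 2 := by rw [norm_one]; linarith
  have hcube : ‖w‖ ^ 3 ≤ (1 / 2) * ‖w‖ ^ 2 := by
    have h0 : 0 ≤ ‖w‖ := norm_nonneg w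
    nlinarith
  have hf : ‖1 - (1 - w) * Complex.exp w‖ ≤ (3 / 2) * ‖w‖ ^ 2 := by
    rw [hfeq]
    calc ‖w ^ 2 / 2 + w ^ 3 / 2 - (1 - w) * R‖
        ≤ ‖w ^ 2 / 2 + w ^ 3 / 2‖ + ‖(1 - w) * R‖ :=
          norm_sub_le _ _
    _ ≤ (‖w ^ 2 / 2‖ + ‖w ^ 3 / 2‖) + ‖1 - w‖ * ‖R‖ := by
          rw [norm_mul]
          exact add_le_add_left (norm_add_le (w ^ 2 / 2) (w ^ 3 / 2)) _
    _ ≤ (‖w‖ ^ 2 / 2 + ‖w‖ ^ 3 / 2) + (3 / 2) * (‖w‖ ^ 3 * (2 / 9)) := by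
          have e1 : ‖w ^ 2 / 2‖ = ‖w‖ ^ 2 / 2 := by
            rw [norm_div, norm_pow]; simp
          have e2 : ‖w ^ 3 / 2‖ = ‖w‖ ^ 3 / 2 := by
            rw [norm_div, norm_pow]; simp
          rw [e1, e2]
          have := mul_le_mul h1w hRabs (norm_nonneg R) (by norm_num)
          linarith
    _ ≤ (3 / 2) * ‖w‖ ^ 2 := by nlinarith [norm_nonneg w, sq_nonneg (‖w‖)]
  have hdiff : r₀ w - Complex.exp w = (1 - (1 - w) * Complex.exp w) / (1 - w) := by
    rw [r₀]; field_simp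
  have hkey : ‖r₀ w - Complex.exp w‖ ≤ (3 / 2) * ‖w‖ ^ 2 := by
    rw [hdiff, norm_div]
    calc ‖1 - (1 - w) * Complex.exp w‖ / ‖1 - w‖
        ≤ ‖1 - (1 - w) * Complex.exp w‖ :=
          div_le_self (norm_nonneg _) hden
    _ ≤ (3 / 2) * ‖w‖ ^ 2 := hf
  have hfactor : r₀ w ^ 2 - Complex.exp z = (r₀ w - Complex.exp w) * (r₀ w + Complex.exp w) := by
    have hz : Complex.exp z = Complex.exp w * Complex.exp w := by
      rw [← Complex.exp_add]; congr 1; rw [hw]; ring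
    rw [hz]; ring
  rw [hfactor, norm_mul]
  have hsum2 : ‖r₀ w + Complex.exp w‖ ≤ 2 := by
    calc ‖r₀ w + Complex.exp w‖ ≤ ‖r₀ w‖ + ‖Complex.exp w‖ :=
      norm_add_le _ _
    _ ≤ 2 := by linarith
  calc ‖r₀ w - Complex.exp w‖ * ‖r₀ w + Complex.exp w‖
      ≤ ((3 / 2) * ‖w‖ ^ 2) * 2 :=
        mul_le_mul hkey hsum2 (norm_nonneg _)
          (by positivity)
  _ = (6 / 8) * ‖z‖ ^ 2 := by rw [hwz]; ring
end
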